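/- arXiv:2207.12678 — 3 statements merged into one kernel-verified Lean document; each statement's English description precedes it below -/
import Mathlib

section
/- Consider the two-layer linear network f(x) = (1/√m) Aᵀ W x with A ∈ ℝᵐ, W ∈ ℝ^{m×d}, data matrix X ∈ ℝ^{d×n}, residual D = (1/√m) XᵀWᵀA − Y, and gradient descent updates A⁺ = A − (2η/(n√m)) W X D and W⁺ = W − (2η/(n√m)) A Dᵀ Xᵀ. Then the new residual D⁺ = (1/√m) Xᵀ (W⁺)ᵀ A⁺ − Y satisfies D⁺ = (I − ηM)D + (4η²/(n²m)) (Fᵀ D) XᵀX D, where M = (2/(mn))(‖A‖² XᵀX + Xᵀ Wᵀ W X) and F = D + Y. -/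
open Matrix

lemma aux_vmv {k l : ℕ} (u : Fin k → ℝ) (v w : Fin l → ℝ) :
    (vecMulVec u v).mulVec w = (v ⬝ᵥ w) • u := by
  ext i
  simp only [vecMulVec_apply, mulVec, dotProduct, Pi.smul_apply, smul_eq_mul, Finset.sum_mul]
  exact Finset.sum_congr rfl fun j _ => by ring

lemma aux_vmv_T {k l : ℕ} (u : Fin k → ℝ) (v : Fin l → ℝ) :
    (vecMulVec u v)ᵀ = vecMulVec v u := by
  ext i j; simp [vecMulVec_apply, mul_comm]

/-- Exact one-step gradient-descent dynamics of the residual vector in a two-layer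
linear network: `D⁺ = (I − ηM)D + (4η²/(n²m)) (Fᵀ D) XᵀX D` with
`M = (2/(mn))(‖A‖² XᵀX + XᵀWᵀWX)` and `F = D + Y`. -/
theorem residual_update_two_layer_linear (m d n : ℕ) (hm : 0 < m) (hn : 0 < n)
    (η : ℝ) (hη : 0 < η)
    (A : Fin m → ℝ) (W : Matrix (Fin m) (Fin d) ℝ) (X : Matrix (Fin d) (Fin n) ℝ)
    (Y D F : Fin n → ℝ)
    (hD : D = (1 / Real.sqrt m) • (Xᵀ * Wᵀ).mulVec A - Y)
    (hF : F = D + Y)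
    (Aplus : Fin m → ℝ) (Wplus : Matrix (Fin m) (Fin d) ℝ)
    (hA : Aplus = A - (2 * η / ((n : ℝ) * Real.sqrt m)) • (W * X).mulVec D)
    (hW : Wplus = W - (2 * η / ((n : ℝ) * Real.sqrt m)) • Matrix.vecMulVec A (X.mulVec D))
    (Dplus : Fin n → ℝ)
    (hDp : Dplus = (1 / Real.sqrt m) • (Xᵀ * Wplusᵀ).mulVec Aplus - Y)
    (M : Matrix (Fin n) (Fin n) ℝ)
    (hM : M = (2 / ((m : ℝ) * n)) • ((A ⬝ᵥ A) • (Xᵀ * X) + Xᵀ * Wᵀ * W * X)) :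
    Dplus = (1 - η • M).mulVec D
      + ((4 * η ^ 2 / ((n : ℝ) ^ 2 * m)) * (F ⬝ᵥ D)) • (Xᵀ * X).mulVec D := by
  have hm' : (0:ℝ) < m := by exact_mod_cast hm
  have hn' : (0:ℝ) < n := by exact_mod_cast hn
  have hs : (0:ℝ) < Real.sqrt m := Real.sqrt_pos.mpr hm'
  have hss : Real.sqrt m * Real.sqrt m = m := Real.mul_self_sqrt hm'.le
  set c : ℝ := 2 * η / ((n : ℝ) * Real.sqrt m) with hc
  have hWA : (Xᵀ * Wᵀ).mulVec A = Real.sqrt m • F := by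
    rw [hF, hD, sub_add_cancel, smul_smul, mul_one_div, div_self hs.ne', one_smul]
  have hAD : A ⬝ᵥ (W * X).mulVec D = Real.sqrt m * (F ⬝ᵥ D) := by
    rw [dotProduct_mulVec, ← mulVec_transpose, transpose_mul, hWA, smul_dotProduct,
      smul_eq_mul]
  have key : (Xᵀ * Wplusᵀ).mulVec Aplus =
      Real.sqrt m • F - (c * (A ⬝ᵥ A)) • (Xᵀ * X).mulVec D
        - c • (Xᵀ * Wᵀ * W * X).mulVec D
        + (c ^ 2 * Real.sqrt m * (F ⬝ᵥ D)) • (Xᵀ * X).mulVec D := by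
    rw [hA, hW, transpose_sub, transpose_smul, aux_vmv_T, Matrix.mul_sub, Matrix.mul_smul,
      sub_mulVec, mulVec_sub, mulVec_sub, mulVec_smul, mulVec_smul,
      smul_mulVec, smul_mulVec]
    rw [← Matrix.mulVec_mulVec A Xᵀ (vecMulVec (X.mulVec D) A),
      ← Matrix.mulVec_mulVec ((W * X).mulVec D) Xᵀ (vecMulVec (X.mulVec D) A),
      aux_vmv, aux_vmv, hWA, hAD]
    have h1 : (Xᵀ * Wᵀ).mulVec ((W * X).mulVec D) = (Xᵀ * Wᵀ * W * X).mulVec D := by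
      rw [Matrix.mulVec_mulVec, Matrix.mul_assoc (Xᵀ * Wᵀ) W X]
    have h2 : Xᵀ.mulVec ((A ⬝ᵥ A) • X.mulVec D) = (A ⬝ᵥ A) • (Xᵀ * X).mulVec D := by
      rw [Matrix.mulVec_smul, Matrix.mulVec_mulVec]
    have h3 : Xᵀ.mulVec ((Real.sqrt m * (F ⬝ᵥ D)) • X.mulVec D)
        = (Real.sqrt m * (F ⬝ᵥ D)) • (Xᵀ * X).mulVec D := by
      rw [Matrix.mulVec_smul, Matrix.mulVec_mulVec]
    rw [h1, h2, h3, smul_smul, smul_smul]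
    module
  have es2 : 1 / Real.sqrt m * c = η * (2 / ((m:ℝ) * n)) := by
    rw [hc]; field_simp; linear_combination (-1) * hss
  have es1 : 1 / Real.sqrt m * (c * (A ⬝ᵥ A)) = η * (2 / ((m:ℝ) * n)) * (A ⬝ᵥ A) := by
    rw [← mul_assoc, es2]
  have es3 : 1 / Real.sqrt m * (c ^ 2 * Real.sqrt m * (F ⬝ᵥ D))
      = 4 * η ^ 2 / ((n:ℝ) ^ 2 * m) * (F ⬝ᵥ D) := by
    have : 1 / Real.sqrt m * (c ^ 2 * Real.sqrt m) = 4 * η ^ 2 / ((n:ℝ) ^ 2 * m) := by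
      rw [hc]; field_simp; linear_combination (-4) * hss
    rw [← mul_assoc, this]
  have hRHS : (1 - η • ((2 / ((m:ℝ) * n)) • ((A ⬝ᵥ A) • (Xᵀ * X) + Xᵀ * Wᵀ * W * X))).mulVec D
      = D - (η * (2 / ((m:ℝ) * n)) * (A ⬝ᵥ A)) • (Xᵀ * X).mulVec D
        - (η * (2 / ((m:ℝ) * n))) • (Xᵀ * Wᵀ * W * X).mulVec D := by
    rw [sub_mulVec, one_mulVec, smul_mulVec, smul_mulVec, add_mulVec,
      smul_mulVec]
    module
  rw [hDp, key, hM, hRHS, smul_add, smul_sub, smul_sub, smul_smul, smul_smul, smul_smul,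
    smul_smul, es1, es2, es3, one_div_mul_cancel hs.ne', one_smul, hF]
  abel
end

section
/- Let XᵀX ∈ ℝ^{n×n} be symmetric PSD with top eigenvalue λ₁ > 0, unit top eigenvector v₁, and all other eigenvalues at most λ₁/2. Let M = γ XᵀX + Γ where γ ≥ γ₀ > 0 and ‖Γ‖ ≤ ε (operator norm). Let u be a unit top eigenvector of M with eigenvalue Λ = λ_max(M). Then, writing cos θ = ⟨v₁, u⟩, one has sin²θ ≤ 4ε/(γ₀ λ₁), and moreover Λ ≥ v₁ᵀ M v₁ ≥ Λ − 2ε. -/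
/-- `v₁`-similarity: if `M = γ S + Γ` with `S` symmetric PSD having top eigenvalue
`lam1 > 0` (unit eigenvector `v₁`) and all other eigenvalues at most `lam1/2`,
`γ ≥ γ₀ > 0`, `‖Γ‖ ≤ ε`, and `u` is a unit top eigenvector of `M` with top
eigenvalue `Λ`, then `sin²θ ≤ 4ε/(γ₀·lam1)` where `cos θ = ⟨v₁, u⟩`, and
`Λ ≥ v₁ᵀ M v₁ ≥ Λ − 2ε`. -/
theorem top_eigenvector_similarity (n : ℕ) (S M Γ : Matrix (Fin n) (Fin n) ℝ)
    (hS : S.PosSemidef) (lam1 γ γ₀ ε Λ : ℝ) (hlam1 : 0 < lam1)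
    (v₁ u : EuclideanSpace ℝ (Fin n)) (hv₁ : ‖v₁‖ = 1)
    (hv₁eig : Matrix.toEuclideanLin S v₁ = lam1 • v₁)
    (hgap : ∀ w : EuclideanSpace ℝ (Fin n), (inner ℝ v₁ w : ℝ) = 0 →
      (inner ℝ w (Matrix.toEuclideanLin S w) : ℝ) ≤ (lam1 / 2) * ‖w‖ ^ 2)
    (hM : M = γ • S + Γ) (hγ : γ₀ ≤ γ) (hγ₀ : 0 < γ₀)
    (hΓ : ∀ w : EuclideanSpace ℝ (Fin n), ‖Matrix.toEuclideanLin Γ w‖ ≤ ε * ‖w‖)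
    (hu : ‖u‖ = 1) (hueig : Matrix.toEuclideanLin M u = Λ • u)
    (hΛmax : ∀ w : EuclideanSpace ℝ (Fin n),
      (inner ℝ w (Matrix.toEuclideanLin M w) : ℝ) ≤ Λ * ‖w‖ ^ 2) :
    1 - (inner ℝ v₁ u : ℝ) ^ 2 ≤ 4 * ε / (γ₀ * lam1) ∧
      (inner ℝ v₁ (Matrix.toEuclideanLin M v₁) : ℝ) ≤ Λ ∧
      Λ - 2 * ε ≤ (inner ℝ v₁ (Matrix.toEuclideanLin M v₁) : ℝ) := by

  have hsymm : ∀ a b : EuclideanSpace ℝ (Fin n),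
      (inner ℝ (Matrix.toEuclideanLin S a) b : ℝ) = inner ℝ a (Matrix.toEuclideanLin S b) :=
    Matrix.isHermitian_iff_isSymmetric.mp hS.isHermitian
  set c : ℝ := inner ℝ v₁ u with hc
  set w : EuclideanSpace ℝ (Fin n) := u - c • v₁ with hw
  have hvv : (inner ℝ v₁ v₁ : ℝ) = 1 := by
    rw [real_inner_self_eq_norm_sq, hv₁]; norm_num
  have huu : (inner ℝ u u : ℝ) = 1 := by
    rw [real_inner_self_eq_norm_sq, hu]; norm_num
  have horth : (inner ℝ v₁ w : ℝ) = 0 := by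
    rw [hw, inner_sub_right, real_inner_smul_right, hvv, mul_one, ← hc, sub_self]
  have hws : ‖w‖ ^ 2 = 1 - c ^ 2 := by
    rw [← real_inner_self_eq_norm_sq]
    simp only [hw, inner_sub_left, inner_sub_right, real_inner_smul_left,
      real_inner_smul_right, hvv, huu, ← hc]
    have hcu : (inner ℝ u v₁ : ℝ) = c := by rw [hc, real_inner_comm]
    rw [hcu]
    ring
  have hε : 0 ≤ ε := by
    have h := hΓ v₁
    rw [hv₁, mul_one] at h
    exact le_trans (norm_nonneg _) h
  have hΓbound : ∀ a : EuclideanSpace ℝ (Fin n), ‖a‖ = 1 →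
      |(inner ℝ a (Matrix.toEuclideanLin Γ a) : ℝ)| ≤ ε := by
    intro a ha
    calc |(inner ℝ a (Matrix.toEuclideanLin Γ a) : ℝ)|
        ≤ ‖a‖ * ‖Matrix.toEuclideanLin Γ a‖ := abs_real_inner_le_norm _ _
      _ ≤ ε := by rw [ha, one_mul]; simpa [ha] using hΓ a
  have hMexp : ∀ a b : EuclideanSpace ℝ (Fin n),
      (inner ℝ a (Matrix.toEuclideanLin M b) : ℝ) =
      γ * inner ℝ a (Matrix.toEuclideanLin S b) + inner ℝ a (Matrix.toEuclideanLin Γ b) := by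
    intro a b
    rw [hM, map_add, map_smul, LinearMap.add_apply, LinearMap.smul_apply,
      inner_add_right, real_inner_smul_right]
  have hv₁Sv₁ : (inner ℝ v₁ (Matrix.toEuclideanLin S v₁) : ℝ) = lam1 := by
    rw [hv₁eig, real_inner_smul_right, hvv, mul_one]
  have hv₁Sw : (inner ℝ v₁ (Matrix.toEuclideanLin S w) : ℝ) = 0 := by
    rw [← hsymm, hv₁eig, real_inner_smul_left, horth, mul_zero]
  have hwSv₁ : (inner ℝ w (Matrix.toEuclideanLin S v₁) : ℝ) = 0 := by
    rw [hv₁eig, real_inner_smul_right, real_inner_comm, horth, mul_zero]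
  have hu_dec : u = c • v₁ + w := by rw [hw]; abel
  have huSu : (inner ℝ u (Matrix.toEuclideanLin S u) : ℝ) =
      c ^ 2 * lam1 + inner ℝ w (Matrix.toEuclideanLin S w) := by
    have h : (inner ℝ u (Matrix.toEuclideanLin S u) : ℝ)
        = inner ℝ (c • v₁ + w) (Matrix.toEuclideanLin S (c • v₁ + w)) := by rw [← hu_dec]
    rw [h, map_add, map_smul, inner_add_left, inner_add_right, inner_add_right,
      real_inner_smul_left, real_inner_smul_left, real_inner_smul_right,
      real_inner_smul_right, hv₁Sv₁, hv₁Sw, hwSv₁]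
    ring
  have hwSw : (inner ℝ w (Matrix.toEuclideanLin S w) : ℝ) ≤ (lam1 / 2) * (1 - c ^ 2) := by
    have := hgap w horth
    rwa [hws] at this
  have hΛeq : Λ = (inner ℝ u (Matrix.toEuclideanLin M u) : ℝ) := by
    rw [hueig, real_inner_smul_right, huu, mul_one]
  have huΓu : (inner ℝ u (Matrix.toEuclideanLin Γ u) : ℝ) ≤ ε :=
    le_trans (le_abs_self _) (hΓbound u hu)
  have hv₁Γv₁ : -ε ≤ (inner ℝ v₁ (Matrix.toEuclideanLin Γ v₁) : ℝ) :=
    neg_le_of_abs_le (hΓbound v₁ hv₁)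
  have hΛub : Λ ≤ γ * (c ^ 2 * lam1 + (lam1 / 2) * (1 - c ^ 2)) + ε := by
    rw [hΛeq, hMexp, huSu]
    have hγpos : (0:ℝ) < γ := lt_of_lt_of_le hγ₀ hγ
    nlinarith [hwSw, huΓu]
  have hv₁Mv₁ : γ * lam1 - ε ≤ (inner ℝ v₁ (Matrix.toEuclideanLin M v₁) : ℝ) := by
    rw [hMexp, hv₁Sv₁]
    linarith [hv₁Γv₁]
  have hpart2 : (inner ℝ v₁ (Matrix.toEuclideanLin M v₁) : ℝ) ≤ Λ := by
    have := hΛmax v₁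
    rwa [hv₁, one_pow, mul_one] at this
  have hγpos : (0:ℝ) < γ := lt_of_lt_of_le hγ₀ hγ
  have hc2 : c ^ 2 ≤ 1 := by have h := sq_nonneg ‖w‖; linarith [hws]
  have hkey : γ * (lam1 / 2) * (1 - c ^ 2) ≤ 2 * ε := by
    linarith only [hΛub, hv₁Mv₁, hpart2]
  have h1 : c ^ 2 * lam1 + (lam1 / 2) * (1 - c ^ 2) ≤ lam1 := by
    have := mul_nonneg hlam1.le (sub_nonneg.mpr hc2)
    linarith only [this]
  have h2 : γ * (c ^ 2 * lam1 + (lam1 / 2) * (1 - c ^ 2)) ≤ γ * lam1 :=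
    mul_le_mul_of_nonneg_left h1 hγpos.le
  refine ⟨?_, hpart2, ?_⟩
  · rw [le_div_iff₀ (by positivity : (0:ℝ) < γ₀ * lam1)]
    have h3 := mul_le_mul_of_nonneg_right hγ (mul_nonneg hlam1.le (sub_nonneg.mpr hc2))
    linarith only [hkey, h3]
  · linarith only [hΛub, h2, hv₁Mv₁]
end

section
/- Let M ∈ ℝ^{n×n} be symmetric PSD with orthonormal eigenvectors v₁,…,vₙ and eigenvalues λ₁,…,λₙ, all satisfying λᵢ < 1/η for i ≥ 2 (η > 0). Let R'(0) ⊥ v₁ and R'(t+1) = (I − ηM(I − v₁v₁ᵀ)) R'(t). Suppose additionally λᵢ > 0 for i in the support of R'(0). Then for all t ≥ 1, R'(t) ⊥ v₁, R'(t)ᵀvᵢ = (1−ηλᵢ)ᵗ R'(0)ᵀvᵢ, and if R'(0) = −(I − v₁v₁ᵀ)Y then R'(t)ᵀ(R'(t) + Y) = Σ_{i≥2} (R'(t)ᵀvᵢ)² (1 − (1−ηλᵢ)^{−t}) ≤ 0. -/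
/-- The auxiliary projected-residual sequence `R'(t)` with fixed eigenvectors stays
orthogonal to `v₁`, contracts per eigendirection, and satisfies
`R'(t)ᵀ(R'(t) + Y) ≤ 0` if `R'(0) = −(I − v₁v₁ᵀ)Y`. -/
theorem auxiliary_projected_residual (n : ℕ) [NeZero n]
    (M : Matrix (Fin n) (Fin n) ℝ) (hM : M.PosSemidef)
    (η : ℝ) (hη : 0 < η)
    (v : OrthonormalBasis (Fin n) ℝ (EuclideanSpace ℝ (Fin n)))
    (lam : Fin n → ℝ) (hlam0 : ∀ i, 0 ≤ lam i)
    (heig : ∀ i, Matrix.toEuclideanLin M (v i) = lam i • v i)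
    (hsm : ∀ i, i ≠ 0 → lam i < 1 / η)
    (R' : ℕ → EuclideanSpace ℝ (Fin n))
    (h0 : (inner ℝ (v 0) (R' 0) : ℝ) = 0)
    (hrec : ∀ t, R' (t + 1)
      = R' t - η • Matrix.toEuclideanLin M (R' t - (inner ℝ (v 0) (R' t) : ℝ) • v 0))
    (hsupp : ∀ i, (inner ℝ (v i) (R' 0) : ℝ) ≠ 0 → 0 < lam i)
    (Y : EuclideanSpace ℝ (Fin n)) :
    (∀ t, 1 ≤ t → (inner ℝ (v 0) (R' t) : ℝ) = 0) ∧
    (∀ t, ∀ i : Fin n, i ≠ 0 →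
      (inner ℝ (R' t) (v i) : ℝ) = (1 - η * lam i) ^ t * (inner ℝ (R' 0) (v i) : ℝ)) ∧
    (R' 0 = -(Y - (inner ℝ (v 0) Y : ℝ) • v 0) →
      ∀ t, ((inner ℝ (R' t) (R' t + Y) : ℝ)
          = ∑ i ∈ Finset.univ.erase (0 : Fin n),
              (inner ℝ (R' t) (v i) : ℝ) ^ 2 * (1 - ((1 - η * lam i) ^ t)⁻¹)) ∧
        (inner ℝ (R' t) (R' t + Y) : ℝ) ≤ 0) := by
  have hsym : (Matrix.toEuclideanLin M).IsSymmetric :=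
    Matrix.isHermitian_iff_isSymmetric.mp hM.1
  have hvv : ∀ i j : Fin n, (inner ℝ (v i) (v j) : ℝ) = if i = j then 1 else 0 :=
    orthonormal_iff_ite.mp v.orthonormal
  have hMv : ∀ (i : Fin n) (x : EuclideanSpace ℝ (Fin n)),
      (inner ℝ (v i) (Matrix.toEuclideanLin M x) : ℝ) = lam i * inner ℝ (v i) x := by
    intro i x
    rw [← hsym (v i) x, heig i, real_inner_smul_left]
  -- step formula
  have hstep : ∀ t (i : Fin n), (inner ℝ (v i) (R' (t+1)) : ℝ)
      = (inner ℝ (v i) (R' t) : ℝ)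
        - η * (lam i * ((inner ℝ (v i) (R' t) : ℝ)
            - (inner ℝ (v 0) (R' t) : ℝ) * (inner ℝ (v i) (v 0) : ℝ))) := by
    intro t i
    rw [hrec t, inner_sub_right, real_inner_smul_right, hMv, inner_sub_right,
      real_inner_smul_right]
  have orth0 : ∀ t, (inner ℝ (v 0) (R' t) : ℝ) = 0 := by
    intro t
    induction t with
    | zero => exact h0
    | succ t ih => rw [hstep t 0, ih, hvv]; simp
  have contr : ∀ t (i : Fin n), i ≠ 0 →
      (inner ℝ (v i) (R' t) : ℝ) = (1 - η * lam i) ^ t * (inner ℝ (v i) (R' 0) : ℝ) := by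
    intro t i hi
    induction t with
    | zero => simp
    | succ t ih =>
      rw [hstep t i, ih, hvv, if_neg hi]
      ring
  refine ⟨fun t _ => orth0 t, fun t i hi => by
    rw [real_inner_comm, contr t i hi, real_inner_comm], ?_⟩
  intro hR0 t
  set a : Fin n → ℝ := fun i => 1 - η * lam i with ha
  have hapos : ∀ i : Fin n, i ≠ 0 → 0 < a i := by
    intro i hi
    have := hsm i hi
    have : η * lam i < 1 := by
      have := (lt_div_iff₀ hη).mp (hsm i hi)
      linarith
    simp only [ha]; linarith
  have hale : ∀ i : Fin n, a i ≤ 1 := by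
    intro i
    have := hlam0 i
    have : 0 ≤ η * lam i := mul_nonneg hη.le this
    simp only [ha]; linarith
  have hYv : ∀ i : Fin n, i ≠ 0 → (inner ℝ (v i) Y : ℝ) = -(inner ℝ (v i) (R' 0) : ℝ) := by
    intro i hi
    rw [hR0, inner_neg_right, inner_sub_right, real_inner_smul_right, hvv, if_neg hi]
    ring
  have hpars : (inner ℝ (R' t) (R' t + Y) : ℝ)
      = ∑ i, (inner ℝ (R' t) (v i) : ℝ) * (inner ℝ (v i) (R' t + Y) : ℝ) :=
    (v.sum_inner_mul_inner _ _).symm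
  have hzero : (inner ℝ (R' t) (v 0) : ℝ) * (inner ℝ (v 0) (R' t + Y) : ℝ) = 0 := by
    rw [real_inner_comm, orth0 t]; ring
  have hsum : (inner ℝ (R' t) (R' t + Y) : ℝ)
      = ∑ i ∈ Finset.univ.erase (0 : Fin n),
          (inner ℝ (R' t) (v i) : ℝ) * (inner ℝ (v i) (R' t + Y) : ℝ) := by
    rw [hpars, ← Finset.add_sum_erase Finset.univ _ (Finset.mem_univ (0 : Fin n)), hzero,
      zero_add]
  have hterm : ∀ i ∈ Finset.univ.erase (0 : Fin n),
      (inner ℝ (R' t) (v i) : ℝ) * (inner ℝ (v i) (R' t + Y) : ℝ)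
        = (inner ℝ (R' t) (v i) : ℝ) ^ 2 * (1 - ((1 - η * lam i) ^ t)⁻¹) := by
    intro i hi
    have hi0 : i ≠ 0 := Finset.ne_of_mem_erase hi
    have hat : (0:ℝ) < a i ^ t := pow_pos (hapos i hi0) t
    have h1 : (inner ℝ (R' t) (v i) : ℝ) = a i ^ t * (inner ℝ (v i) (R' 0) : ℝ) := by
      rw [real_inner_comm]; exact contr t i hi0
    have h2 : (inner ℝ (v i) (R' t + Y) : ℝ)
        = a i ^ t * (inner ℝ (v i) (R' 0) : ℝ) - (inner ℝ (v i) (R' 0) : ℝ) := by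
      rw [inner_add_right, contr t i hi0, hYv i hi0]; ring
    rw [h1, h2]
    have hne : a i ^ t ≠ 0 := hat.ne'
    show a i ^ t * (inner ℝ (v i) (R' 0) : ℝ) * _ = _ * (1 - (a i ^ t)⁻¹)
    field_simp
  have heq : (inner ℝ (R' t) (R' t + Y) : ℝ)
      = ∑ i ∈ Finset.univ.erase (0 : Fin n),
          (inner ℝ (R' t) (v i) : ℝ) ^ 2 * (1 - ((1 - η * lam i) ^ t)⁻¹) := by
    rw [hsum]; exact Finset.sum_congr rfl hterm
  refine ⟨heq, ?_⟩
  rw [heq]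
  apply Finset.sum_nonpos
  intro i hi
  have hi0 : i ≠ 0 := Finset.ne_of_mem_erase hi
  have hat : (0:ℝ) < a i ^ t := pow_pos (hapos i hi0) t
  have hat1 : a i ^ t ≤ 1 := pow_le_one₀ (hapos i hi0).le (hale i)
  have : (1:ℝ) ≤ (a i ^ t)⁻¹ := (one_le_inv₀ hat).mpr hat1
  have hfac : (1 - ((1 - η * lam i) ^ t)⁻¹) ≤ 0 := by
    have : ((1 - η * lam i) ^ t)⁻¹ = (a i ^ t)⁻¹ := rfl
    rw [this]; linarith
  exact mul_nonpos_of_nonneg_of_nonpos (sq_nonneg _) hfac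
end
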